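/- Every tournament on 2^{n−1} vertices contains a transitive subtournament on n vertices. -/

import Mathlib

lemma tour_aux {V : Type*} [DecidableEq V] (E : V → V → Prop)
    (hor : ∀ x y, E x y → ¬ E y x)
    (htour : ∀ x y : V, x ≠ y → E x y ∨ E y x) :
    ∀ n (s : Finset V), 2 ^ n ≤ s.card →
      ∃ f : Fin (n + 1) ↪ V, (∀ i, f i ∈ s) ∧ ∀ i j, i < j → E (f i) (f j) := by
  intro n
  induction n with
  | zero =>
    intro s hs
    simp only [pow_zero] at hs
    obtain ⟨x, hx⟩ := Finset.card_pos.mp hs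
    refine ⟨⟨fun _ => x, fun i j _ => ?_⟩, fun _ => hx, fun i j hij => absurd ?_ hij.ne⟩ <;>
      · apply Fin.ext; omega
  | succ n ih =>
    intro s hs
    have hpos : 0 < s.card := lt_of_lt_of_le (by positivity) hs
    obtain ⟨x, hx⟩ := Finset.card_pos.mp hpos
    classical
    set A := (s.erase x).filter (fun y => E x y) with hA
    set B := (s.erase x).filter (fun y => E y x) with hB
    have hunion : s.erase x ⊆ A ∪ B := by
      intro y hy
      rcases htour x y (fun h => (Finset.ne_of_mem_erase hy) h.symm) with h | h
      · exact Finset.mem_union_left _ (Finset.mem_filter.mpr ⟨hy, h⟩)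
      · exact Finset.mem_union_right _ (Finset.mem_filter.mpr ⟨hy, h⟩)
    have hcards : 2 ^ (n + 1) - 1 ≤ A.card + B.card := by
      calc 2 ^ (n+1) - 1 ≤ (s.erase x).card := by
            rw [Finset.card_erase_of_mem hx]; omega
        _ ≤ (A ∪ B).card := Finset.card_le_card hunion
        _ ≤ A.card + B.card := Finset.card_union_le _ _
    have key : 2 ^ n ≤ A.card ∨ 2 ^ n ≤ B.card := by
      by_contra h
      push_neg at h
      have : 2 ^ (n+1) = 2 ^ n + 2 ^ n := by ring
      omega
    rcases key with hbig | hbig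
    · obtain ⟨f, hfmem, hford⟩ := ih A hbig
      have hxA : ∀ i, f i ≠ x := by
        intro i h
        have := hfmem i
        rw [h, hA, Finset.mem_filter] at this
        exact hor x x this.2 this.2
      refine ⟨⟨Fin.cons x (f : Fin (n+1) → V), ?_⟩, ?_, ?_⟩
      · rw [Fin.cons_injective_iff]
        exact ⟨fun ⟨i, hi⟩ => hxA i hi, f.injective⟩
      · intro i
        rcases Fin.eq_zero_or_eq_succ i with rfl | ⟨i', rfl⟩
        · simpa using hx
        · simp only [Function.Embedding.coeFn_mk, Fin.cons_succ]
          exact Finset.mem_of_mem_erase (Finset.mem_of_mem_filter _ (hfmem i'))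
      · intro i j hij
        rcases Fin.eq_zero_or_eq_succ i with rfl | ⟨i', rfl⟩ <;>
          rcases Fin.eq_zero_or_eq_succ j with rfl | ⟨j', rfl⟩
        · exact absurd hij (lt_irrefl _)
        · simp only [Function.Embedding.coeFn_mk, Fin.cons_zero, Fin.cons_succ]
          exact (Finset.mem_filter.mp (hfmem j')).2
        · exact absurd hij (Fin.not_lt_zero _)
        · simp only [Function.Embedding.coeFn_mk, Fin.cons_succ]
          exact hford i' j' (Fin.succ_lt_succ_iff.mp hij)
    · obtain ⟨f, hfmem, hford⟩ := ih B hbig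
      have hxB : ∀ i, f i ≠ x := by
        intro i h
        have := hfmem i
        rw [h, hB, Finset.mem_filter] at this
        exact hor x x this.2 this.2
      refine ⟨⟨Fin.snoc (f : Fin (n+1) → V) x, ?_⟩, ?_, ?_⟩
      · intro i j hij
        rcases Fin.eq_castSucc_or_eq_last i with ⟨i', rfl⟩ | rfl <;>
          rcases Fin.eq_castSucc_or_eq_last j with ⟨j', rfl⟩ | rfl
        · simp only [Fin.snoc_castSucc] at hij
          exact congrArg Fin.castSucc (f.injective hij)
        · simp only [Fin.snoc_castSucc, Fin.snoc_last] at hij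
          exact absurd hij (hxB i')
        · simp only [Fin.snoc_castSucc, Fin.snoc_last] at hij
          exact absurd hij.symm (hxB j')
        · rfl
      · intro i
        rcases Fin.eq_castSucc_or_eq_last i with ⟨i', rfl⟩ | rfl
        · show Fin.snoc (α := fun _ => V) (f : Fin (n+1) → V) x (Fin.castSucc i') ∈ s
          simp only [Function.Embedding.coeFn_mk, Fin.snoc_castSucc]
          exact Finset.mem_of_mem_erase (Finset.mem_of_mem_filter _ (hfmem i'))
        · show Fin.snoc (α := fun _ => V) (f : Fin (n+1) → V) x (Fin.last (n+1)) ∈ s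
          simpa using hx
      · intro i j hij
        rcases Fin.eq_castSucc_or_eq_last i with ⟨i', rfl⟩ | rfl <;>
          rcases Fin.eq_castSucc_or_eq_last j with ⟨j', rfl⟩ | rfl
        · show E (Fin.snoc (α := fun _ => V) (f : Fin (n+1) → V) x (Fin.castSucc i')) (Fin.snoc (α := fun _ => V) (f : Fin (n+1) → V) x (Fin.castSucc j'))
          simp only [Function.Embedding.coeFn_mk, Fin.snoc_castSucc]
          exact hford i' j' (Fin.castSucc_lt_castSucc_iff.mp hij)
        · show E (Fin.snoc (α := fun _ => V) (f : Fin (n+1) → V) x (Fin.castSucc i')) (Fin.snoc (α := fun _ => V) (f : Fin (n+1) → V) x (Fin.last (n+1)))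
          simp only [Function.Embedding.coeFn_mk, Fin.snoc_castSucc, Fin.snoc_last]
          exact (Finset.mem_filter.mp (hfmem i')).2
        · exact absurd hij (Fin.not_lt.mpr (Fin.le_last _))
        · exact absurd hij (lt_irrefl _)

/-- An oriented graph: no loops, at most one directed edge per pair
(asymmetry implies irreflexivity). -/
def IsOriented {V : Type*} (E : V → V → Prop) : Prop :=
  ∀ x y, E x y → ¬ E y x

/-- The graph contains an independent set of size `m`. -/
def HasIndep {V : Type*} (E : V → V → Prop) (m : ℕ) : Prop :=
  ∃ s : Finset V, s.card = m ∧ ∀ x ∈ s, ∀ y ∈ s, ¬ E x y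

/-- The graph contains a transitive tournament on `n` vertices. -/
def HasTransTour {V : Type*} (E : V → V → Prop) (n : ℕ) : Prop :=
  ∃ f : Fin n ↪ V, ∀ i j : Fin n, i < j → E (f i) (f j)

theorem stmt4 {V : Type*} [Fintype V] (E : V → V → Prop) (n : ℕ)
    (hcard : Fintype.card V = 2 ^ (n - 1))
    (hor : IsOriented E)
    (htour : ∀ x y : V, x ≠ y → E x y ∨ E y x) :
    HasTransTour E n := by
  classical
  cases n with
  | zero =>
    exact ⟨⟨Fin.elim0, fun i => i.elim0⟩, fun i => i.elim0⟩
  | succ m =>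
    have hs : 2 ^ m ≤ (Finset.univ : Finset V).card := by
      rw [Finset.card_univ, hcard]; simp
    obtain ⟨f, _, hford⟩ := tour_aux E hor htour m Finset.univ hs
    exact ⟨f, hford⟩
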